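/- Let k ≥ k_0 and suppose p_1,…,p_m are polynomials with p_i ∈ ℝ[x_{Δ_i}] satisfying p_1 + ⋯ + p_m + f_min = 0 and f_i + p_i ∈ Ideal_{Δ_i}[h_i]_{2k} + QM_{Δ_i}[g_i]_{2k} for every i. Then f attains the value f_min on K (i.e., there exists u ∈ K with f(u) = f_min) if and only if there exists u ∈ K with f_i(u) + p_i(u) = 0 for every i ∈ {1,…,m}. -/
import Mathlib


open MvPolynomial Pointwise

noncomputable section

/-- A polynomial is a sum of squares of polynomials supported in `Δ`. -/
def IsSOSIn (n : ℕ) (Δ : Finset (Fin n)) (σ : MvPolynomial (Fin n) ℝ) : Prop :=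
  ∃ (r : ℕ) (p : Fin r → MvPolynomial (Fin n) ℝ),
    (∀ l, p l ∈ MvPolynomial.supported ℝ (↑Δ : Set (Fin n))) ∧ σ = ∑ l, p l ^ 2

/-- Degree-`2k` truncation `Ideal_{Δ}[h]_{2k}`. -/
def IdealTrunc (n : ℕ) (Δ : Finset (Fin n)) {ℓ : ℕ}
    (h : Fin ℓ → MvPolynomial (Fin n) ℝ) (k : ℕ) : Set (MvPolynomial (Fin n) ℝ) :=
  { q | ∃ φ : Fin ℓ → MvPolynomial (Fin n) ℝ,
      (∀ j, φ j ∈ MvPolynomial.supported ℝ (↑Δ : Set (Fin n))) ∧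
      (∀ j, (φ j * h j).totalDegree ≤ 2 * k) ∧ q = ∑ j, φ j * h j }

/-- Degree-`2k` truncation `QM_{Δ}[g]_{2k}`. -/
def QMTrunc (n : ℕ) (Δ : Finset (Fin n)) {s : ℕ}
    (g : Fin s → MvPolynomial (Fin n) ℝ) (k : ℕ) : Set (MvPolynomial (Fin n) ℝ) :=
  { q | ∃ (σ₀ : MvPolynomial (Fin n) ℝ) (σ : Fin s → MvPolynomial (Fin n) ℝ),
      IsSOSIn n Δ σ₀ ∧ (∀ j, IsSOSIn n Δ (σ j)) ∧
      σ₀.totalDegree ≤ 2 * k ∧ (∀ j, (σ j * g j).totalDegree ≤ 2 * k) ∧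
      q = σ₀ + ∑ j, σ j * g j }

/-- The Minkowski sum `G_1 + ⋯ + G_m` of a family of subsets of `ℝ[x]`. -/
def SpaSum {n m : ℕ} (G : Fin m → Set (MvPolynomial (Fin n) ℝ)) :
    Set (MvPolynomial (Fin n) ℝ) :=
  { q | ∃ t : Fin m → MvPolynomial (Fin n) ℝ, (∀ i, t i ∈ G i) ∧ q = ∑ i, t i }

theorem stmt_3
    (n m : ℕ) (hn : 1 ≤ n) (hm : 1 ≤ m)
    (Δ : Fin m → Finset (Fin n))
    (ℓ s : Fin m → ℕ)
    (f : Fin m → MvPolynomial (Fin n) ℝ)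
    (h : (i : Fin m) → Fin (ℓ i) → MvPolynomial (Fin n) ℝ)
    (g : (i : Fin m) → Fin (s i) → MvPolynomial (Fin n) ℝ)
    (hf : ∀ i, f i ∈ MvPolynomial.supported ℝ (↑(Δ i) : Set (Fin n)))
    (hh : ∀ i j, h i j ∈ MvPolynomial.supported ℝ (↑(Δ i) : Set (Fin n)))
    (hg : ∀ i j, g i j ∈ MvPolynomial.supported ℝ (↑(Δ i) : Set (Fin n)))
    (K : Set (Fin n → ℝ))
    (hKdef : K = { x | (∀ i j, MvPolynomial.eval x (h i j) = 0) ∧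
        (∀ i j, 0 ≤ MvPolynomial.eval x (g i j)) })
    (fmin : ℝ)
    (hfmin : IsGLB ((fun x => MvPolynomial.eval x (∑ i, f i)) '' K) fmin)
    (k : ℕ)
    -- `k ≥ k₀`:
    (hkf : (∑ i, f i).totalDegree ≤ 2 * k)
    (hkh : ∀ i j, (h i j).totalDegree ≤ 2 * k)
    (hkg : ∀ i j, (g i j).totalDegree ≤ 2 * k)
    (p : Fin m → MvPolynomial (Fin n) ℝ)
    (hp : ∀ i, p i ∈ MvPolynomial.supported ℝ (↑(Δ i) : Set (Fin n)))
    (hpsum : (∑ i, p i) + MvPolynomial.C fmin = 0)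
    (hpmem : ∀ i, f i + p i ∈ IdealTrunc n (Δ i) (h i) k + QMTrunc n (Δ i) (g i) k) :
    (∃ u ∈ K, MvPolynomial.eval u (∑ i, f i) = fmin) ↔
      ∃ u ∈ K, ∀ i, MvPolynomial.eval u (f i) + MvPolynomial.eval u (p i) = 0 := by
   classical
  -- Key nonnegativity: for u ∈ K, eval u (f i + p i) ≥ 0
  have key : ∀ u ∈ K, ∀ i, 0 ≤ MvPolynomial.eval u (f i) + MvPolynomial.eval u (p i) := by
    intro u hu i
    subst hKdef
    obtain ⟨hu1, hu2⟩ := hu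
    obtain ⟨a, ha, b, hb, hab⟩ := hpmem i
    obtain ⟨φ, -, -, rfl⟩ := ha
    obtain ⟨σ₀, σ, hσ₀, hσ, -, -, rfl⟩ := hb
    have evalSOS : ∀ q : MvPolynomial (Fin n) ℝ, IsSOSIn n (Δ i) q →
        0 ≤ MvPolynomial.eval u q := by
      rintro q ⟨r, w, -, rfl⟩
      simp only [map_sum, map_pow]
      exact Finset.sum_nonneg fun l _ => sq_nonneg _
    have hab' : (∑ j, φ j * h i j) + (σ₀ + ∑ j, σ j * g i j) = f i + p i := hab
    have : MvPolynomial.eval u (f i) + MvPolynomial.eval u (p i)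
        = MvPolynomial.eval u ((∑ j, φ j * h i j) + (σ₀ + ∑ j, σ j * g i j)) := by
      rw [← map_add, ← hab']
    rw [this]
    simp only [map_add, map_sum, map_mul]
    have h1 : (∑ j, MvPolynomial.eval u (φ j) * MvPolynomial.eval u (h i j)) = 0 :=
      Finset.sum_eq_zero fun j _ => by rw [hu1 i j, mul_zero]
    rw [h1, zero_add]
    have h2 : 0 ≤ ∑ j, MvPolynomial.eval u (σ j) * MvPolynomial.eval u (g i j) :=
      Finset.sum_nonneg fun j _ => mul_nonneg (evalSOS _ (hσ j)) (hu2 i j)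
    exact add_nonneg (evalSOS _ hσ₀) h2
  have sump : ∀ u : Fin n → ℝ, ∑ i, MvPolynomial.eval u (p i) = -fmin := by
    intro u
    have := congrArg (MvPolynomial.eval u) hpsum
    simp only [map_add, map_sum, map_zero, MvPolynomial.eval_C] at this
    linarith
  constructor
  · rintro ⟨u, hu, heq⟩
    refine ⟨u, hu, ?_⟩
    have hsum : ∑ i, (MvPolynomial.eval u (f i) + MvPolynomial.eval u (p i)) = 0 := by
      rw [Finset.sum_add_distrib, sump u]
      have : MvPolynomial.eval u (∑ i, f i) = ∑ i, MvPolynomial.eval u (f i) := by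
        simp [map_sum]
      linarith
    intro i
    have := (Finset.sum_eq_zero_iff_of_nonneg (fun j _ => key u hu j)).mp hsum i
      (Finset.mem_univ i)
    exact this
  · rintro ⟨u, hu, heq⟩
    refine ⟨u, hu, ?_⟩
    have hsum : ∑ i, (MvPolynomial.eval u (f i) + MvPolynomial.eval u (p i)) = 0 :=
      Finset.sum_eq_zero fun i _ => heq i
    rw [Finset.sum_add_distrib, sump u] at hsum
    have : MvPolynomial.eval u (∑ i, f i) = ∑ i, MvPolynomial.eval u (f i) := by
      simp [map_sum]
    linarith
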